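/- Kolmogorov–Hájek–Rényi inequality: Let (X_j)_{j=0}^n be a square-integrable martingale with X_0 = 0, and let 0 = ε_0 ≤ ε_1 ≤ … ≤ ε_n be nondecreasing positive reals. Then P(for all j ∈ [1,n], |X_j| < ε_j) ≥ 1 − Σ_{i=1}^n E[(X_i − X_{i−1})²]/ε_i². -/

import Mathlib

open MeasureTheory

/-- Kolmogorov–Hájek–Rényi inequality: if `(X_j)` is a square-integrable martingale with
`X 0 = 0` and `0 = ε_0 ≤ ε_1 ≤ …` with `ε_j > 0` for `j ≥ 1`, then
`P(∀ j ∈ [1,n], |X_j| < ε_j) ≥ 1 - Σ_{i=1}^n E[(X_i - X_{i-1})²]/ε_i²`. -/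
theorem kolmogorov_hajek_renyi {Ω : Type*} [m : MeasurableSpace Ω]
    (P : Measure Ω) [IsProbabilityMeasure P] (ℱ : Filtration ℕ m)
    (X : ℕ → Ω → ℝ) (hmart : Martingale X ℱ P) (hX0 : X 0 = 0)
    (hL2 : ∀ i, MemLp (X i) 2 P)
    (n : ℕ) (ε : ℕ → ℝ) (hε0 : ε 0 = 0) (hmono : Monotone ε)
    (hpos : ∀ j, 1 ≤ j → 0 < ε j) :
    1 - ∑ i ∈ Finset.Icc 1 n, (∫ ω, (X i ω - X (i - 1) ω) ^ 2 ∂P) / (ε i) ^ 2 ≤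
      (P {ω | ∀ j ∈ Finset.Icc 1 n, |X j ω| < ε j}).toReal := by
  classical
  -- integrability facts
  have hint : ∀ i, Integrable (X i) P := fun i => (hL2 i).integrable one_le_two
  have hintsq : ∀ i, Integrable (fun ω => (X i ω) ^ 2) P := fun i => (hL2 i).integrable_sq
  have hintd : ∀ k, Integrable (fun ω => (X (k + 1) ω - X k ω) ^ 2) P := fun k =>
    ((hL2 (k + 1)).sub (hL2 k)).integrable_sq
  have hmeas : ∀ i, Measurable[ℱ i] (X i) := fun i => (hmart.stronglyAdapted i).measurable
  -- the good sets
  set C : ℕ → Set Ω := fun k => {ω | ∀ j ∈ Finset.Icc 1 k, |X j ω| < ε j} with hCdef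
  have hCsucc : ∀ k, C (k + 1) = C k ∩ {ω | |X (k + 1) ω| < ε (k + 1)} := by
    intro k
    ext ω
    simp only [hCdef, Set.mem_setOf_eq, Set.mem_inter_iff]
    constructor
    · intro h
      exact ⟨fun j hj => h j (Finset.Icc_subset_Icc_right (Nat.le_succ k) hj),
        h (k + 1) (Finset.mem_Icc.2 ⟨Nat.le_add_left 1 k, le_rfl⟩)⟩
    · rintro ⟨h1, h2⟩ j hj
      rcases Finset.mem_Icc.1 hj with ⟨hj1, hj2⟩
      rcases Nat.lt_succ_iff_lt_or_eq.1 (Nat.lt_succ_of_le hj2) with h | h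
      · exact h1 j (Finset.mem_Icc.2 ⟨hj1, Nat.lt_succ_iff.1 h⟩)
      · subst h; exact h2
  have hCmeas : ∀ k, MeasurableSet[ℱ k] (C k) := by
    intro k
    induction k with
    | zero =>
      have : C 0 = Set.univ := by
        ext ω
        simp only [hCdef, Set.mem_setOf_eq, Set.mem_univ, iff_true]
        intro j hj
        exact absurd (Finset.mem_Icc.1 hj) (by omega)
      rw [this]; exact MeasurableSet.univ
    | succ k ih =>
      rw [hCsucc k]
      refine MeasurableSet.inter (ℱ.mono (Nat.le_succ k) _ ih) ?_
      have habs : Measurable[ℱ (k + 1)] fun ω => |X (k + 1) ω| :=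
        measurable_abs.comp (hmeas (k + 1))
      exact habs measurableSet_Iio
  have hCmeas' : ∀ k, MeasurableSet (C k) := fun k => ℱ.le k _ (hCmeas k)
  have hCsub : ∀ k, C (k + 1) ⊆ C k := fun k => by
    rw [hCsucc k]; exact Set.inter_subset_left
  set B : ℕ → Set Ω := fun k => C k \ C (k + 1) with hBdef
  have hBmeas : ∀ k, MeasurableSet (B k) := fun k => (hCmeas' k).diff (hCmeas' (k + 1))
  have hBlower : ∀ k, ∀ ω ∈ B k, ε (k + 1) ≤ |X (k + 1) ω| := by
    intro k ω hω
    by_contra h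
    push_neg at h
    exact hω.2 (by rw [hCsucc k]; exact ⟨hω.1, h⟩)
  -- key martingale identity for set integrals
  have hkey : ∀ k (S : Set Ω), MeasurableSet[ℱ k] S →
      ∫ ω in S, (X (k + 1) ω) ^ 2 ∂P =
        (∫ ω in S, (X k ω) ^ 2 ∂P) + ∫ ω in S, (X (k + 1) ω - X k ω) ^ 2 ∂P := by
    intro k S hS
    have hmul : Integrable (fun ω => X k ω * (X (k + 1) ω - X k ω)) P := by
      have heq : (fun ω => X k ω * (X (k + 1) ω - X k ω)) =
          fun ω => ((X (k + 1) ω) ^ 2 - (X k ω) ^ 2 - (X (k + 1) ω - X k ω) ^ 2) / 2 := by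
        funext ω; ring
      rw [heq]
      exact (((hintsq (k + 1)).sub (hintsq k)).sub (hintd k)).div_const 2
    have hd0 : P[X (k + 1) - X k|ℱ k] =ᵐ[P] 0 := by
      have h1 := condExp_sub (μ := P) (m := ℱ k) (hint (k + 1)) (hint k)
      have h2 := hmart.condExp_ae_eq (Nat.le_succ k)
      have h3 := hmart.condExp_ae_eq (le_refl k)
      filter_upwards [h1, h2, h3] with ω e1 e2 e3
      simp only [Pi.sub_apply] at e1
      simp [e1, e2, e3]
    have hm0 : P[(fun ω => X k ω * (X (k + 1) ω - X k ω))|ℱ k] =ᵐ[P] 0 := by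
      have hpull := condExp_mul_of_stronglyMeasurable_left (μ := P) (m := ℱ k)
        (hmart.stronglyAdapted k) (g := X (k + 1) - X k) hmul ((hint (k + 1)).sub (hint k))
      refine hpull.trans ?_
      filter_upwards [hd0] with ω h
      simp only [Pi.mul_apply, Pi.zero_apply] at h ⊢
      rw [h, mul_zero]
    have hzero : ∫ ω in S, X k ω * (X (k + 1) ω - X k ω) ∂P = 0 := by
      rw [← setIntegral_condExp (ℱ.le k) hmul hS]
      rw [integral_congr_ae (ae_restrict_of_ae hm0)]
      simp
    have hpt : ∀ ω, (X (k + 1) ω) ^ 2 =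
        ((X k ω) ^ 2 + (X (k + 1) ω - X k ω) ^ 2) +
          2 * (X k ω * (X (k + 1) ω - X k ω)) := fun ω => by ring
    calc ∫ ω in S, (X (k + 1) ω) ^ 2 ∂P
        = ∫ ω in S, (((X k ω) ^ 2 + (X (k + 1) ω - X k ω) ^ 2) +
            2 * (X k ω * (X (k + 1) ω - X k ω))) ∂P := by
          exact integral_congr_ae (Filter.Eventually.of_forall fun ω => hpt ω)
      _ = (∫ ω in S, ((X k ω) ^ 2 + (X (k + 1) ω - X k ω) ^ 2) ∂P) +
            ∫ ω in S, 2 * (X k ω * (X (k + 1) ω - X k ω)) ∂P := by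
          exact integral_add (((hintsq k).add (hintd k)).restrict)
            ((hmul.const_mul 2).restrict)
      _ = ((∫ ω in S, (X k ω) ^ 2 ∂P) + ∫ ω in S, (X (k + 1) ω - X k ω) ^ 2 ∂P) +
            2 * ∫ ω in S, X k ω * (X (k + 1) ω - X k ω) ∂P := by
          rw [integral_add ((hintsq k).restrict) ((hintd k).restrict),
            integral_const_mul]
      _ = (∫ ω in S, (X k ω) ^ 2 ∂P) + ∫ ω in S, (X (k + 1) ω - X k ω) ^ 2 ∂P := by
          rw [hzero]; ring
  -- main induction
  have hmain : ∀ M : ℕ,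
      (∑ k ∈ Finset.range M, (∫ ω in B k, (X (k + 1) ω) ^ 2 ∂P) / (ε (k + 1)) ^ 2) +
          (∫ ω in C M, (X M ω) ^ 2 ∂P) / (ε M) ^ 2 ≤
        ∑ i ∈ Finset.Icc 1 M, (∫ ω, (X i ω - X (i - 1) ω) ^ 2 ∂P) / (ε i) ^ 2 := by
    intro M
    induction M with
    | zero => simp [hX0]
    | succ M ih =>
      have hεpos : (0 : ℝ) < ε (M + 1) := hpos (M + 1) (Nat.le_add_left 1 M)
      have hsplit : ∫ ω in C M, (X (M + 1) ω) ^ 2 ∂P =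
          (∫ ω in B M, (X (M + 1) ω) ^ 2 ∂P) + ∫ ω in C (M + 1), (X (M + 1) ω) ^ 2 ∂P := by
        have hU : C M = B M ∪ C (M + 1) := by
          rw [hBdef]
          exact (Set.diff_union_of_subset (hCsub M)).symm
        rw [hU, setIntegral_union (disjoint_sdiff_self_left) (hCmeas' (M + 1))
          ((hintsq (M + 1)).restrict) ((hintsq (M + 1)).restrict)]
      have hkey' := hkey M (C M) (hCmeas M)
      have e1 : (∫ ω in B M, (X (M + 1) ω) ^ 2 ∂P) / (ε (M + 1)) ^ 2 +
          (∫ ω in C (M + 1), (X (M + 1) ω) ^ 2 ∂P) / (ε (M + 1)) ^ 2 =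
          (∫ ω in C M, (X M ω) ^ 2 ∂P) / (ε (M + 1)) ^ 2 +
            (∫ ω in C M, (X (M + 1) ω - X M ω) ^ 2 ∂P) / (ε (M + 1)) ^ 2 := by
        rw [← add_div, ← hsplit, hkey', add_div]
      have e2 : (∫ ω in C M, (X M ω) ^ 2 ∂P) / (ε (M + 1)) ^ 2 ≤
          (∫ ω in C M, (X M ω) ^ 2 ∂P) / (ε M) ^ 2 := by
        rcases Nat.eq_zero_or_pos M with h0 | h1
        · subst h0; simp [hX0]
        · have hεM := hpos M h1
          have hle : (ε M) ^ 2 ≤ (ε (M + 1)) ^ 2 := by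
            have := hmono (Nat.le_succ M); nlinarith
          have hnum : 0 ≤ ∫ ω in C M, (X M ω) ^ 2 ∂P :=
            setIntegral_nonneg (hCmeas' M) fun ω _ => sq_nonneg _
          exact div_le_div_of_nonneg_left hnum (by positivity) hle
      have e3 : (∫ ω in C M, (X (M + 1) ω - X M ω) ^ 2 ∂P) / (ε (M + 1)) ^ 2 ≤
          (∫ ω, (X (M + 1) ω - X M ω) ^ 2 ∂P) / (ε (M + 1)) ^ 2 := by
        have := setIntegral_le_integral (μ := P) (s := C M) (hintd M)
          (Filter.Eventually.of_forall fun ω => sq_nonneg _)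
        gcongr
      have hsum : ∑ i ∈ Finset.Icc 1 (M + 1), (∫ ω, (X i ω - X (i - 1) ω) ^ 2 ∂P) / (ε i) ^ 2 =
          (∑ i ∈ Finset.Icc 1 M, (∫ ω, (X i ω - X (i - 1) ω) ^ 2 ∂P) / (ε i) ^ 2) +
            (∫ ω, (X (M + 1) ω - X M ω) ^ 2 ∂P) / (ε (M + 1)) ^ 2 := by
        rw [Finset.sum_Icc_succ_top (Nat.le_add_left 1 M)]
        norm_num
      rw [Finset.sum_range_succ, hsum]
      linarith [ih]
  -- Chebyshev on each B k
  have hcheb : ∀ k, (P (B k)).toReal ≤ (∫ ω in B k, (X (k + 1) ω) ^ 2 ∂P) / (ε (k + 1)) ^ 2 := by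
    intro k
    have hε := hpos (k + 1) (Nat.le_add_left 1 k)
    rw [le_div_iff₀ (by positivity)]
    calc (P (B k)).toReal * ε (k + 1) ^ 2 = ∫ _ in B k, (ε (k + 1)) ^ 2 ∂P := by
          rw [setIntegral_const, smul_eq_mul, measureReal_def]
      _ ≤ ∫ ω in B k, (X (k + 1) ω) ^ 2 ∂P := by
          refine setIntegral_mono_on (integrableOn_const)
            ((hintsq (k + 1)).restrict) (hBmeas k) ?_
          intro ω hω
          have h1 := hBlower k ω hω
          calc (ε (k + 1)) ^ 2 ≤ |X (k + 1) ω| ^ 2 := by nlinarith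
            _ = (X (k + 1) ω) ^ 2 := sq_abs _
  -- telescoping for probabilities
  have hps : ∀ k, (P (C k)).toReal = (P (C (k + 1))).toReal + (P (B k)).toReal := by
    intro k
    have hU : C k = C (k + 1) ∪ B k := by
      rw [hBdef]
      exact (Set.union_diff_cancel (hCsub k)).symm
    rw [hU, measure_union (Set.disjoint_sdiff_right) (hBmeas k),
      ENNReal.toReal_add (measure_ne_top P _) (measure_ne_top P _)]
  have hC0 : (P (C 0)).toReal = 1 := by
    have : C 0 = Set.univ := by
      ext ω
      simp only [hCdef, Set.mem_setOf_eq, Set.mem_univ, iff_true]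
      intro j hj
      exact absurd (Finset.mem_Icc.1 hj) (by omega)
    rw [this, measure_univ, ENNReal.toReal_one]
  have htel : 1 - (P (C n)).toReal = ∑ k ∈ Finset.range n, (P (B k)).toReal := by
    calc 1 - (P (C n)).toReal = (P (C 0)).toReal - (P (C n)).toReal := by rw [hC0]
      _ = ∑ k ∈ Finset.range n, ((P (C k)).toReal - (P (C (k + 1))).toReal) :=
        (Finset.sum_range_sub' (fun k => (P (C k)).toReal) n).symm
      _ = ∑ k ∈ Finset.range n, (P (B k)).toReal :=
        Finset.sum_congr rfl fun k _ => by rw [hps k]; ring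
  -- put it together
  have h1 : ∑ k ∈ Finset.range n, (P (B k)).toReal ≤
      ∑ k ∈ Finset.range n, (∫ ω in B k, (X (k + 1) ω) ^ 2 ∂P) / (ε (k + 1)) ^ 2 :=
    Finset.sum_le_sum fun k _ => hcheb k
  have hfin := hmain n
  have hnonneg : 0 ≤ (∫ ω in C n, (X n ω) ^ 2 ∂P) / (ε n) ^ 2 :=
    div_nonneg (setIntegral_nonneg (hCmeas' n) fun ω _ => sq_nonneg _) (sq_nonneg _)
  have hgoal : 1 - ∑ i ∈ Finset.Icc 1 n, (∫ ω, (X i ω - X (i - 1) ω) ^ 2 ∂P) / (ε i) ^ 2 ≤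
      (P (C n)).toReal := by linarith
  exact hgoal
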